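/- (Cuntz–Holm) Let (a_1,…,a_n) be an n-tuple of complex numbers that is a λ-quiddity. Then there exist indices i, j ∈ {1,…,n} with i ≠ j such that |a_i| < 2 and |a_j| < 2. -/

import Mathlib

open Matrix Polynomial

noncomputable section

/-- The elementary matrix [[a, -1], [1, 0]]. -/
def matE (a : ℂ) : Matrix (Fin 2) (Fin 2) ℂ := !![a, -1; 1, 0]

/-- M_n(a_1, …, a_n) = matE a_n * matE a_{n-1} * ⋯ * matE a_1, for the list [a_1, …, a_n]. -/
def Mlist (l : List ℂ) : Matrix (Fin 2) (Fin 2) ℂ := (l.reverse.map matE).prod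

/-- A λ-quiddity over R : a nonempty tuple of elements of R with M_n(a_1,…,a_n) = ±Id. -/
def IsQuiddity (R : Set ℂ) (l : List ℂ) : Prop :=
  l ≠ [] ∧ (∀ x ∈ l, x ∈ R) ∧ (Mlist l = 1 ∨ Mlist l = -1)

/-- (a_1,…,a_n) ⊕ (b_1,…,b_m) := (a_1+b_m, a_2,…,a_{n-1}, a_n+b_1, b_2,…,b_{m-1}). -/
def oplus (a b : List ℂ) : List ℂ :=
  (a.headI + b.getLastD 0) ::
    (a.tail.dropLast ++ (a.getLastD 0 + b.headI) :: b.tail.dropLast)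

/-- b is obtained from a by a cyclic permutation of a or of the reversal of a. -/
def CyclicEquiv (a b : List ℂ) : Prop :=
  (∃ k, b = a.rotate k) ∨ (∃ k, b = a.reverse.rotate k)

/-- A λ-quiddity c over R is reducible if c ∼ (a_1,…,a_m) ⊕ (b_1,…,b_l) with
(a_1,…,a_m) a tuple of elements of R, (b_1,…,b_l) a λ-quiddity over R, m ≥ 3 and l ≥ 3. -/
def ReducibleQuiddity (R : Set ℂ) (c : List ℂ) : Prop :=
  ∃ a b : List ℂ, (∀ x ∈ a, x ∈ R) ∧ IsQuiddity R b ∧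
    3 ≤ a.length ∧ 3 ≤ b.length ∧ CyclicEquiv c (oplus a b)

/-- The irreducible λ-quiddities over R : the λ-quiddities of size ≥ 3 which are not
reducible (those of size < 3, i.e. (0,0), are by convention not irreducible). -/
def IrreducibleQuiddity (R : Set ℂ) (c : List ℂ) : Prop :=
  IsQuiddity R c ∧ 3 ≤ c.length ∧ ¬ ReducibleQuiddity R c

/-- The subgroup ⟨w⟩ = {kw : k ∈ ℤ} of (ℂ, +), as a set. -/
def subgroupGen (w : ℂ) : Set ℂ := {x | ∃ k : ℤ, x = (k : ℂ) * w}

end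


lemma Mlist_nil : Mlist [] = 1 := rfl

lemma Mlist_append (u v : List ℂ) : Mlist (u ++ v) = Mlist v * Mlist u := by
  simp [Mlist, List.reverse_append]

lemma det_matE (a : ℂ) : (matE a).det = 1 := by
  simp [matE, Matrix.det_fin_two_of]

lemma Mlist_cons (a : ℂ) (t : List ℂ) : Mlist (a :: t) = Mlist t * matE a := by
  have : a :: t = [a] ++ t := rfl
  rw [this, Mlist_append]
  congr 1
  simp [Mlist]

lemma det_Mlist (l : List ℂ) : (Mlist l).det = 1 := by
  induction l with
  | nil => simp [Mlist_nil]
  | cons a t ih => rw [Mlist_cons, Matrix.det_mul, ih, det_matE, one_mul]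

lemma matE_mulVec (a : ℂ) (w : Fin 2 → ℂ) :
    matE a *ᵥ w = ![a * w 0 - w 1, w 0] := by
  funext i
  fin_cases i <;>
    simp [matE, Matrix.mulVec, dotProduct, Fin.sum_univ_two] <;> ring

lemma Mlist_take_succ (l : List ℂ) (k : ℕ) (hk : k < l.length) :
    Mlist (l.take (k+1)) = matE (l.get ⟨k, hk⟩) * Mlist (l.take k) := by
  rw [List.take_succ]
  have : l[k]? = some (l.get ⟨k, hk⟩) := by
    simp [List.getElem?_eq_getElem hk]
  rw [this]
  simp only [Option.toList_some]
  rw [Mlist_append]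
  congr 1
  simp [Mlist]

lemma Mlist_rotate (l : List ℂ) (k : ℕ) (h : Mlist l = 1 ∨ Mlist l = -1) :
    Mlist (l.rotate k) = 1 ∨ Mlist (l.rotate k) = -1 := by
  rcases Nat.eq_zero_or_pos l.length with h0 | h0
  · rw [List.length_eq_zero_iff] at h0
    subst h0
    simpa [List.rotate_nil] using h
  rw [← List.rotate_mod]
  set m := k % l.length with hm
  have hml : m ≤ l.length := le_of_lt (Nat.mod_lt _ h0)
  rw [List.rotate_eq_drop_append_take hml, Mlist_append]
  set A := Mlist (l.take m)
  set B := Mlist (l.drop m)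
  have hBA : B * A = Mlist l := by
    rw [← Mlist_append, List.take_append_drop]
  have hAdet : IsUnit A.det := by
    rw [det_Mlist]; exact isUnit_one
  have hAinv : A * A⁻¹ = 1 := Matrix.mul_nonsing_inv A hAdet
  have : A * B = A * (B * A) * A⁻¹ := by
    simp only [mul_assoc]
    rw [hAinv, mul_one]
  rcases h with h | h
  · left
    rw [this, hBA, h, mul_one, hAinv]
  · right
    rw [this, hBA, h]
    rw [mul_neg, mul_one, neg_mul, hAinv]

lemma lemA (l : List ℂ) (hne : l ≠ [])
    (hq : Mlist l = 1 ∨ Mlist l = -1)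
    (hgood : ∀ (j : ℕ) (hj : j < l.length), j < l.length - 1 →
      2 ≤ ‖l.get ⟨j, hj⟩‖) :
    False := by
  have hn1 : 1 ≤ l.length := List.length_pos_iff.mpr hne
  set n := l.length with hn
  set x : ℕ → Fin 2 → ℂ := fun k => Mlist (l.take k) *ᵥ ![2, 1] with hx
  have hx0 : x 0 = ![2, 1] := by
    simp [hx, Mlist_nil]
  have hstep : ∀ k (hk : k < n), x (k+1) = matE (l.get ⟨k, hk⟩) *ᵥ x k := by
    intro k hk
    simp only [hx]
    rw [Mlist_take_succ l k hk, ← Matrix.mulVec_mulVec]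
  have key : ∀ k, k ≤ n - 1 →
      (k : ℝ) + 2 ≤ ‖x k 0‖ ∧
      ‖x k 1‖ + 1 ≤ ‖x k 0‖ := by
    intro k
    induction k with
    | zero =>
      intro _
      rw [hx0]
      norm_num
    | succ k ih =>
      intro hk
      obtain ⟨h1, h2⟩ := ih (by omega)
      have hkn : k < n := by omega
      have ha : 2 ≤ ‖l.get ⟨k, hkn⟩‖ := hgood k hkn (by omega)
      rw [hstep k hkn, matE_mulVec]
      set a := l.get ⟨k, hkn⟩
      set w0 := x k 0
      set w1 := x k 1
      simp only [Matrix.cons_val_zero, Matrix.cons_val_one, Matrix.head_cons]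
      have habs : ‖a * w0‖ - ‖w1‖ ≤ ‖a * w0 - w1‖ := by
        have := norm_add_le (a * w0 - w1) w1
        simp only [sub_add_cancel] at this
        linarith
      have hmul : ‖a * w0‖ = ‖a‖ * ‖w0‖ := norm_mul _ _
      have hw0nn : (0:ℝ) ≤ ‖w0‖ := norm_nonneg _
      have h2w0 : 2 * ‖w0‖ ≤ ‖a‖ * ‖w0‖ :=
        mul_le_mul_of_nonneg_right ha hw0nn
      push_cast
      constructor <;> linarith
  -- conclude
  have hend : x n = Mlist l *ᵥ ![2, 1] := by
    simp only [hx]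
    rw [List.take_length]
  have hxn1 : ‖x n 1‖ = 1 := by
    rcases hq with h | h <;> rw [hend, h]
    · rw [Matrix.one_mulVec]; simp
    · have : (-1 : Matrix (Fin 2) (Fin 2) ℂ) *ᵥ ![2,1] = -![2,1] := by
        rw [Matrix.neg_mulVec, Matrix.one_mulVec]
      rw [this]; simp
  have hn1' : n - 1 < n := by omega
  have hsub : n - 1 + 1 = n := by omega
  have hlast : x n 1 = x (n-1) 0 := by
    have := hstep (n-1) hn1'
    rw [hsub] at this
    rw [this, matE_mulVec]
    simp
  obtain ⟨h1, -⟩ := key (n-1) le_rfl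
  rw [hlast] at hxn1
  have hnn : (0:ℝ) ≤ ((n-1 : ℕ) : ℝ) := Nat.cast_nonneg _
  linarith

theorem stmt16 (l : List ℂ) (h : IsQuiddity Set.univ l) :
    ∃ i j : Fin l.length, i ≠ j ∧
      ‖l.get i‖ < 2 ∧ ‖l.get j‖ < 2 := by
  obtain ⟨hne, -, hq⟩ := h
  by_contra hcon
  push_neg at hcon
  have hn1 : 0 < l.length := List.length_pos_iff.mpr hne
  have hex : ∃ i0 : Fin l.length, ∀ i : Fin l.length, i ≠ i0 →
      2 ≤ ‖l.get i‖ := by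
    by_cases hb : ∃ i : Fin l.length, ‖l.get i‖ < 2
    · obtain ⟨i0, hi0⟩ := hb
      exact ⟨i0, fun i hi => hcon i0 i (Ne.symm hi) hi0⟩
    · push_neg at hb
      exact ⟨⟨0, hn1⟩, fun i _ => hb i⟩
  obtain ⟨i0, hi0⟩ := hex
  set l' := l.rotate (i0.val + 1) with hl'
  have hlen : l'.length = l.length := List.length_rotate l _
  have hne' : l' ≠ [] := by
    intro hh
    rw [hh] at hlen
    simp at hlen
    omega
  refine lemA l' hne' (Mlist_rotate l _ hq) ?_
  intro j hj hj1
  show 2 ≤ ‖(l.rotate (i0.val + 1)).get ⟨j, hj⟩‖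
  rw [List.get_rotate]
  set m := (j + (i0.val + 1)) % l.length with hm
  have hjlen : j < l.length := by rwa [hlen] at hj
  have hj1' : j < l.length - 1 := by rwa [hlen] at hj1
  have hi0lt : i0.val < l.length := i0.isLt
  have hmne : m ≠ i0.val := by
    rcases Nat.lt_or_ge (j + (i0.val + 1)) l.length with hlt | hge
    · rw [hm, Nat.mod_eq_of_lt hlt]
      omega
    · have h2 : j + (i0.val + 1) - l.length < l.length := by omega
      rw [hm, Nat.mod_eq_sub_mod hge, Nat.mod_eq_of_lt h2]
      omega
  exact hi0 _ (fun he => hmne (by simpa using congrArg Fin.val he))
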